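/- (Proposition 6) Let P be a normal logic program over n atoms with m rules and (D, Q) its matricized form, let C be a set of k constraints with constraint matrix Q_c, and fix ℓ₂, ℓ₃, ℓ₄ > 0. For u ∈ ℝ^n define J_SU(u) = 0.5·(‖u − min₁(d)‖₂² + ℓ₂·‖u ⊙ (1 − u)‖₂²) with d = D(1 − min₁(Q(1 − u^δ))), J_c(u) = Σ_{c ∈ Fin k} (1 − min₁((Q_c(1 − u^δ))(c))), J_LF(u) = Σ_{s=1}^t (1 − min₁(A_s)) where L₁,…,L_t enumerate all loops of P, M = 1 − min₁(Q(1 − u^δ)) and A_s = Σ_{i ∈ L_s}(1 − u(i)) + Σ_{j support rule for L_s} M(j), and J_{SU+c+LF}(u) = J_SU(u) + ℓ₃·J_c(u) + ℓ₄·J_LF(u). Then J_{SU+c+LF}(u) = 0 if and only if u ∈ {0,1}^n and the model I = {i | u(i) = 1} is a stable model of P satisfying every constraint of C. -/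

import Mathlib

open Finset Matrix

noncomputable section

/-- componentwise `x ↦ min x 1` -/
def min1 {k : Type*} (v : k → ℝ) : k → ℝ := fun j => min (v j) 1

/-- the vectorized model `u_I ∈ {0,1}^n` of a model `I` -/
def vecI {n : ℕ} (I : Finset (Fin n)) : Fin n → ℝ := fun i => if i ∈ I then 1 else 0

/-- the dualized vector `u^δ = [u ; 1-u] ∈ ℝ^{2n}` -/
def dvec {n : ℕ} (u : Fin n → ℝ) : Fin n ⊕ Fin n → ℝ := Sum.elim u fun i => 1 - u i

/-- the matrix `D ∈ ℝ^{n×m}` of the matricized program: `D(i,j) = 1` iff `h j = i` -/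
def Dmat {n m : ℕ} (hd : Fin m → Fin n) : Matrix (Fin n) (Fin m) ℝ :=
  Matrix.of fun i j => if hd j = i then 1 else 0

/-- the matrix `Q = [Q¹ Q²] ∈ ℝ^{m×2n}` of the matricized program -/
def Qmat {n m : ℕ} (pos neg : Fin m → Finset (Fin n)) :
    Matrix (Fin m) (Fin n ⊕ Fin n) ℝ :=
  Matrix.of fun j => Sum.elim (fun i => if i ∈ pos j then (1 : ℝ) else 0)
    (fun i => if i ∈ neg j then (1 : ℝ) else 0)

/-- a half of the matrix `Q`: `Qhalf pos = Q¹`, `Qhalf neg = Q²` -/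
def Qhalf {n m : ℕ} (b : Fin m → Finset (Fin n)) : Matrix (Fin m) (Fin n) ℝ :=
  Matrix.of fun j i => if i ∈ b j then 1 else 0

/-- `I` satisfies the body of rule `j` -/
def bodyTrue {n m : ℕ} (pos neg : Fin m → Finset (Fin n)) (I : Finset (Fin n))
    (j : Fin m) : Prop :=
  pos j ⊆ I ∧ neg j ∩ I = ∅

instance {n m : ℕ} (pos neg : Fin m → Finset (Fin n)) (I : Finset (Fin n)) :
    DecidablePred (bodyTrue pos neg I) := fun j =>
  inferInstanceAs (Decidable (pos j ⊆ I ∧ neg j ∩ I = ∅))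

/-- `I` is a supported model of the program -/
def isSupported {n m : ℕ} (hd : Fin m → Fin n) (pos neg : Fin m → Finset (Fin n))
    (I : Finset (Fin n)) : Prop :=
  ∀ i, i ∈ I ↔ ∃ j, hd j = i ∧ bodyTrue pos neg I j

/-- the Euclidean norm `‖·‖₂` on `ℝ^k` -/
def euclidNorm {k : Type*} [Fintype k] (v : k → ℝ) : ℝ := Real.sqrt (∑ i, v i ^ 2)

/-- the vector `d = D(1 - min₁(Q(1 - u^δ)))` -/
def dvecOf {n m : ℕ} (hd : Fin m → Fin n) (pos neg : Fin m → Finset (Fin n))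
    (u : Fin n → ℝ) : Fin n → ℝ :=
  (Dmat hd).mulVec fun j => 1 - min1 ((Qmat pos neg).mulVec fun x => 1 - dvec u x) j

open scoped Classical in
/-- the least model of the definite program whose rules are `hd j ← ps j`
for exactly those `j` with `act j`: the smallest set `J` of atoms such that
for every such rule, `ps j ⊆ J` implies `hd j ∈ J`. -/
def LMFor {n m : ℕ} (hd : Fin m → Fin n) (ps : Fin m → Finset (Fin n))
    (act : Fin m → Prop) : Finset (Fin n) :=
  Finset.univ.filter fun a =>
    ∀ J : Finset (Fin n), (∀ j, act j → ps j ⊆ J → hd j ∈ J) → a ∈ J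

/-- `I` is a stable model: the least model of the Gelfond–Lifschitz reduct `P^I` equals `I` -/
def isStable {n m : ℕ} (hd : Fin m → Fin n) (pos neg : Fin m → Finset (Fin n))
    (I : Finset (Fin n)) : Prop :=
  LMFor hd pos (fun j => neg j ∩ I = ∅) = I

/-- edge of the positive dependency graph `pdg(P)` -/
def pdgEdge {n m : ℕ} (hd : Fin m → Fin n) (pos : Fin m → Finset (Fin n))
    (a b : Fin n) : Prop :=
  ∃ j, hd j = a ∧ b ∈ pos j

/-- `L` is a loop of the program: a nonempty set of atoms such that between any two of
its atoms there are (nonempty) directed paths in `pdg(P)` in both directions, where a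
singleton `L = {a}` requires the edge `(a,a)` -/
def isLoop {n m : ℕ} (hd : Fin m → Fin n) (pos : Fin m → Finset (Fin n))
    (L : Finset (Fin n)) : Prop :=
  L.Nonempty ∧ (∀ a₁ ∈ L, ∀ a₂ ∈ L, Relation.TransGen (pdgEdge hd pos) a₁ a₂) ∧
    (∀ a, L = {a} → pdgEdge hd pos a a)

/-- rule `j` is a support rule for the loop `L` -/
def isSupportRule {n m : ℕ} (hd : Fin m → Fin n) (pos : Fin m → Finset (Fin n))
    (L : Finset (Fin n)) (j : Fin m) : Prop :=
  hd j ∈ L ∧ pos j ∩ L = ∅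

instance {n m : ℕ} (hd : Fin m → Fin n) (pos : Fin m → Finset (Fin n))
    (L : Finset (Fin n)) : DecidablePred (isSupportRule hd pos L) := fun j =>
  inferInstanceAs (Decidable (hd j ∈ L ∧ pos j ∩ L = ∅))

/-- `I` satisfies the loop formula `LF(L)` -/
def satLF {n m : ℕ} (hd : Fin m → Fin n) (pos neg : Fin m → Finset (Fin n))
    (I : Finset (Fin n)) (L : Finset (Fin n)) : Prop :=
  L ⊆ I → ∃ j, isSupportRule hd pos L j ∧ bodyTrue pos neg I j

/-- `M = 1 - min₁(Q(1 - u^δ))` : the (continuous) truth values of the rule bodies -/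
def Mvec {n m : ℕ} (pos neg : Fin m → Finset (Fin n)) (u : Fin n → ℝ) : Fin m → ℝ :=
  fun j => 1 - min1 ((Qmat pos neg).mulVec fun x => 1 - dvec u x) j

/-- `A_L = Σ_{i ∈ L}(1 - u(i)) + Σ_{j support rule for L} M(j)` -/
def Aval {n m : ℕ} (hd : Fin m → Fin n) (pos neg : Fin m → Finset (Fin n))
    (u : Fin n → ℝ) (L : Finset (Fin n)) : ℝ :=
  (∑ i ∈ L, (1 - u i)) +
    ∑ j ∈ Finset.univ.filter (isSupportRule hd pos L), Mvec pos neg u j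

/-- the cost function `J_SU` -/
def JSU {n m : ℕ} (hd : Fin m → Fin n) (pos neg : Fin m → Finset (Fin n)) (ℓ₂ : ℝ)
    (u : Fin n → ℝ) : ℝ :=
  0.5 * (euclidNorm (fun i => u i - min1 (dvecOf hd pos neg u) i) ^ 2
    + ℓ₂ * euclidNorm (fun i => u i * (1 - u i)) ^ 2)

/-- the constraint cost `J_c(u) = Σ_c (1 - min₁((Q_c(1 - u^δ))(c)))` -/
def Jc {n k : ℕ} (cpos cneg : Fin k → Finset (Fin n)) (u : Fin n → ℝ) : ℝ :=
  ∑ c, (1 - min1 ((Qmat cpos cneg).mulVec fun x => 1 - dvec u x) c)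

section LM
variable {n m : ℕ} (hd : Fin m → Fin n) (ps : Fin m → Finset (Fin n)) (act : Fin m → Prop)

lemma mem_LMFor {a : Fin n} :
    a ∈ LMFor hd ps act ↔ ∀ J : Finset (Fin n),
      (∀ j, act j → ps j ⊆ J → hd j ∈ J) → a ∈ J := by
  simp [LMFor]

lemma LMFor_subset {J : Finset (Fin n)} (hJ : ∀ j, act j → ps j ⊆ J → hd j ∈ J) :
    LMFor hd ps act ⊆ J := fun a ha => (mem_LMFor hd ps act).1 ha J hJ

lemma LMFor_closed : ∀ j, act j → ps j ⊆ LMFor hd ps act → hd j ∈ LMFor hd ps act := by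
  intro j hj hsub
  rw [mem_LMFor]
  intro J hJ
  exact hJ j hj (hsub.trans (LMFor_subset hd ps act hJ))

end LM

theorem lin_zhao {n m : ℕ} (hd : Fin m → Fin n) (pos neg : Fin m → Finset (Fin n))
    (I : Finset (Fin n)) :
    isStable hd pos neg I ↔
      isSupported hd pos neg I ∧ ∀ L, isLoop hd pos L → satLF hd pos neg I L := by
  classical
  set act : Fin m → Prop := fun j => neg j ∩ I = ∅ with hact
  constructor
  · intro hs
    have hIc : ∀ j, act j → pos j ⊆ I → hd j ∈ I := by
      intro j hj hsub
      rw [← hs] at hsub ⊢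
      exact LMFor_closed hd pos act j hj hsub
    constructor
    · intro i
      constructor
      · intro hi
        by_contra hno
        push_neg at hno
        have hJ : ∀ j, act j → pos j ⊆ I.erase i → hd j ∈ I.erase i := by
          intro j hj hsub
          have h1 : pos j ⊆ I := hsub.trans (Finset.erase_subset _ _)
          have h2 : hd j ∈ I := hIc j hj h1
          refine Finset.mem_erase.2 ⟨?_, h2⟩
          intro he
          exact hno j he ⟨h1, hj⟩
        have := (LMFor_subset hd pos act hJ) (hs ▸ hi)
        exact (Finset.mem_erase.1 this).1 rfl
      · rintro ⟨j, hj, hb1, hb2⟩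
        exact hj ▸ hIc j hb2 hb1
    · intro L hL hLI
      by_contra hno
      push_neg at hno
      have hJ : ∀ j, act j → pos j ⊆ I \ L → hd j ∈ I \ L := by
        intro j hj hsub
        have h1 : pos j ⊆ I := hsub.trans (Finset.sdiff_subset)
        have h2 : hd j ∈ I := hIc j hj h1
        refine Finset.mem_sdiff.2 ⟨h2, ?_⟩
        intro hmem
        refine hno j ⟨hmem, ?_⟩ ⟨h1, hj⟩
        apply Finset.eq_empty_of_forall_notMem
        intro x hx
        exact (Finset.mem_sdiff.1 (hsub (Finset.mem_inter.1 hx).1)).2 (Finset.mem_inter.1 hx).2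
      obtain ⟨a, ha⟩ := hL.1
      have : a ∈ I \ L := (LMFor_subset hd pos act hJ) (hs ▸ hLI ha)
      exact (Finset.mem_sdiff.1 this).2 ha
  · rintro ⟨hsupp, hlf⟩
    have hIc : ∀ j, act j → pos j ⊆ I → hd j ∈ I := by
      intro j hj hsub
      exact (hsupp (hd j)).2 ⟨j, rfl, hsub, hj⟩
    have hLM : LMFor hd pos act ⊆ I := LMFor_subset hd pos act hIc
    have hIL : I ⊆ LMFor hd pos act := by
      by_contra hsub
      set E : Finset (Fin n) := I \ LMFor hd pos act with hE
      have hEne : E.Nonempty := by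
        rw [Finset.sdiff_nonempty]
        exact fun h => hsub h
      set e : Fin n → Fin n → Prop :=
        fun a b => a ∈ E ∧ b ∈ E ∧ pdgEdge hd pos a b with he
      have htg_mem : ∀ {a b}, Relation.TransGen e a b → b ∈ E := by
        intro a b h
        induction h with
        | single h => exact h.2.1
        | tail _ h _ => exact h.2.1
      set reach : Fin n → Finset (Fin n) :=
        fun a => Finset.univ.filter fun b => Relation.TransGen e a b with hreach
      -- every element of E has an e-successor
      have hout : ∀ a ∈ E, ∃ b, e a b := by
        intro a ha
        obtain ⟨haI, haLM⟩ := Finset.mem_sdiff.1 ha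
        obtain ⟨j, hj, hb1, hb2⟩ := (hsupp a).1 haI
        have : ¬ pos j ⊆ LMFor hd pos act := by
          intro hsubLM
          exact haLM (hj ▸ LMFor_closed hd pos act j hb2 hsubLM)
        obtain ⟨b, hbpos, hbLM⟩ := Finset.not_subset.1 this
        exact ⟨b, ha, Finset.mem_sdiff.2 ⟨hb1 hbpos, hbLM⟩, j, hj, hbpos⟩
      have hreach_ne : ∀ a ∈ E, (reach a).Nonempty := by
        intro a ha
        obtain ⟨b, hb⟩ := hout a ha
        exact ⟨b, by simp [hreach, Relation.TransGen.single hb]⟩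
      obtain ⟨a₀, ha₀E, hmin⟩ := Finset.exists_min_image E (fun a => (reach a).card) hEne
      set L : Finset (Fin n) := reach a₀ with hLdef
      have hLE : L ⊆ E := fun b hb => htg_mem (Finset.mem_filter.1 hb).2
      have hreach_eq : ∀ b ∈ L, reach b = L := by
        intro b hb
        have hbE : b ∈ E := hLE hb
        have hsub2 : reach b ⊆ L := by
          intro c hc
          simp only [hLdef, hreach, Finset.mem_filter, Finset.mem_univ, true_and] at hc ⊢
          exact Relation.TransGen.trans (Finset.mem_filter.1 hb).2 hc
        exact Finset.eq_of_subset_of_card_le hsub2 (hmin b hbE)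
      have hLtrans : ∀ b ∈ L, ∀ c ∈ L, Relation.TransGen e b c := by
        intro b hb c hc
        rw [← hreach_eq b hb] at hc
        exact (Finset.mem_filter.1 hc).2
      have hLoop : isLoop hd pos L := by
        refine ⟨hreach_ne a₀ ha₀E, ?_, ?_⟩
        · intro b hb c hc
          exact Relation.TransGen.mono (fun x y h => h.2.2) _ _ (hLtrans b hb c hc)
        · intro a haL
          have haLmem : a ∈ L := haL ▸ Finset.mem_singleton_self a
          have h := hLtrans a haLmem a haLmem
          cases h with
          | single h => exact h.2.2
          | tail h1 h2 =>
            rename_i c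
            have hcL : c ∈ L := by
              rw [← hreach_eq a haLmem]
              exact Finset.mem_filter.2 ⟨Finset.mem_univ _, h1⟩
            rw [haL, Finset.mem_singleton] at hcL
            rw [hcL] at h2
            exact h2.2.2
      obtain ⟨j, ⟨hjL, hjdisj⟩, hb1, hb2⟩ :=
        hlf L hLoop (fun b hb => (Finset.mem_sdiff.1 (hLE hb)).1)
      have hposLM : pos j ⊆ LMFor hd pos act := by
        intro b hb
        by_contra hbLM
        have hbE : b ∈ E := Finset.mem_sdiff.2 ⟨hb1 hb, hbLM⟩
        have hedge : e (hd j) b := ⟨hLE hjL, hbE, j, rfl, hb⟩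
        have : b ∈ L := by
          rw [← hreach_eq (hd j) hjL]
          exact Finset.mem_filter.2 ⟨Finset.mem_univ _, Relation.TransGen.single hedge⟩
        exact Finset.notMem_empty b (hjdisj ▸ Finset.mem_inter.2 ⟨hb, this⟩)
      have : hd j ∈ LMFor hd pos act := LMFor_closed hd pos act j hb2 hposLM
      exact (Finset.mem_sdiff.1 (hLE hjL)).2 this
    exact Finset.Subset.antisymm hLM hIL

section arith
variable {n m : ℕ} {u : Fin n → ℝ}

lemma mulVecQ (pos neg : Fin m → Finset (Fin n)) (u : Fin n → ℝ) (j : Fin m) :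
    (Qmat pos neg).mulVec (fun x => 1 - dvec u x) j
      = (∑ i ∈ pos j, (1 - u i)) + ∑ i ∈ neg j, u i := by
  classical
  simp only [Matrix.mulVec, Qmat, dotProduct, Fintype.sum_sum_type, Matrix.of_apply,
    Sum.elim_inl, Sum.elim_inr, dvec, ite_mul, one_mul, zero_mul, sub_sub_cancel]
  rw [Finset.sum_ite_mem, Finset.sum_ite_mem, Finset.univ_inter, Finset.univ_inter]

lemma u_nonneg (hb : ∀ i, u i = 0 ∨ u i = 1) (i : Fin n) : 0 ≤ u i := by
  rcases hb i with h | h <;> simp [h]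

lemma u_le_one (hb : ∀ i, u i = 0 ∨ u i = 1) (i : Fin n) : u i ≤ 1 := by
  rcases hb i with h | h <;> simp [h]

lemma not_mem_Iu (hb : ∀ i, u i = 0 ∨ u i = 1) (i : Fin n) :
    i ∉ (Finset.univ.filter fun i => u i = 1) ↔ u i = 0 := by
  rcases hb i with h | h <;> simp [h]

lemma min1_bodyval (hb : ∀ i, u i = 0 ∨ u i = 1) (pos neg : Fin m → Finset (Fin n))
    (j : Fin m) :
    min ((∑ i ∈ pos j, (1 - u i)) + ∑ i ∈ neg j, u i) 1
      = if bodyTrue pos neg (Finset.univ.filter fun i => u i = 1) j then 0 else 1 := by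
  classical
  by_cases hbt : bodyTrue pos neg (Finset.univ.filter fun i => u i = 1) j
  · have h1 : (∑ i ∈ pos j, (1 - u i)) = 0 := by
      apply Finset.sum_eq_zero
      intro i hi
      have := hbt.1 hi
      simp only [Finset.mem_filter] at this
      simp [this.2]
    have h2 : (∑ i ∈ neg j, u i) = 0 := by
      apply Finset.sum_eq_zero
      intro i hi
      rw [← not_mem_Iu hb]
      intro hmem
      exact Finset.notMem_empty i (hbt.2 ▸ Finset.mem_inter.2 ⟨hi, hmem⟩)
    simp [h1, h2, hbt]
  · rw [if_neg hbt]
    apply min_eq_right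
    have hs1 : 0 ≤ ∑ i ∈ pos j, (1 - u i) :=
      Finset.sum_nonneg fun i _ => by linarith [u_le_one hb i]
    have hs2 : 0 ≤ ∑ i ∈ neg j, u i :=
      Finset.sum_nonneg fun i _ => u_nonneg hb i
    rcases not_and_or.1 hbt with h | h
    · obtain ⟨i, hi, hni⟩ := Finset.not_subset.1 h
      have hui : u i = 0 := (not_mem_Iu hb i).1 hni
      have : (1 : ℝ) ≤ ∑ i ∈ pos j, (1 - u i) := by
        have := Finset.single_le_sum (f := fun i => 1 - u i)
          (fun i _ => by show (0:ℝ) ≤ 1 - u i; linarith [u_le_one hb i]) hi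
        rw [hui] at this; linarith
      linarith
    · obtain ⟨i, hi⟩ := Finset.nonempty_iff_ne_empty.2 h
      rw [Finset.mem_inter] at hi
      have hui : u i = 1 := (Finset.mem_filter.1 hi.2).2
      have : (1 : ℝ) ≤ ∑ i ∈ neg j, u i := by
        have := Finset.single_le_sum (f := fun i => u i)
          (fun i _ => u_nonneg hb i) hi.1
        rw [hui] at this; linarith
      linarith

lemma Mvec_eq (hb : ∀ i, u i = 0 ∨ u i = 1) (pos neg : Fin m → Finset (Fin n))
    (j : Fin m) :
    Mvec pos neg u j
      = if bodyTrue pos neg (Finset.univ.filter fun i => u i = 1) j then 1 else 0 := by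
  unfold Mvec min1
  rw [mulVecQ, min1_bodyval hb]
  split <;> ring

lemma min1_dvecOf (hb : ∀ i, u i = 0 ∨ u i = 1) (hd : Fin m → Fin n)
    (pos neg : Fin m → Finset (Fin n)) (i : Fin n) :
    min1 (dvecOf hd pos neg u) i
      = if ∃ j, hd j = i ∧ bodyTrue pos neg (Finset.univ.filter fun i => u i = 1) j
        then 1 else 0 := by
  classical
  set I := Finset.univ.filter fun i => u i = 1
  have hd' : dvecOf hd pos neg u i
      = ∑ j ∈ Finset.univ.filter fun j => hd j = i ∧ bodyTrue pos neg I j, (1 : ℝ) := by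
    show (Dmat hd).mulVec (Mvec pos neg u) i = _
    rw [Finset.sum_filter]
    simp only [Matrix.mulVec, dotProduct, Dmat, Matrix.of_apply]
    apply Finset.sum_congr rfl
    intro j _
    rw [Mvec_eq hb]
    by_cases h1 : hd j = i <;> by_cases h2 : bodyTrue pos neg I j <;> simp [h1, h2] <;> exact h2
  rw [Finset.sum_const, nsmul_eq_mul, mul_one] at hd'
  unfold min1
  rw [hd']
  by_cases hex : ∃ j, hd j = i ∧ bodyTrue pos neg I j
  · rw [if_pos hex]
    apply min_eq_right
    obtain ⟨j, hj⟩ := hex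
    have : 0 < (Finset.univ.filter fun j => hd j = i ∧ bodyTrue pos neg I j).card :=
      Finset.card_pos.2 ⟨j, by simp [hj.1, hj.2]⟩
    exact_mod_cast this
  · rw [if_neg hex]
    have : (Finset.univ.filter fun j => hd j = i ∧ bodyTrue pos neg I j) = ∅ := by
      apply Finset.filter_eq_empty_iff.2
      intro j _
      intro h
      exact hex ⟨j, h⟩
    simp [this]

lemma supported_iff (hb : ∀ i, u i = 0 ∨ u i = 1) (hd : Fin m → Fin n)
    (pos neg : Fin m → Finset (Fin n)) :
    (∀ i, u i - min1 (dvecOf hd pos neg u) i = 0) ↔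
      isSupported hd pos neg (Finset.univ.filter fun i => u i = 1) := by
  unfold isSupported
  apply forall_congr'
  intro i
  rw [sub_eq_zero, min1_dvecOf hb]
  by_cases hex : ∃ j, hd j = i ∧ bodyTrue pos neg (Finset.univ.filter fun i => u i = 1) j
  · rw [if_pos hex]
    simp only [hex, iff_true, Finset.mem_filter, Finset.mem_univ, true_and]
  · rw [if_neg hex]
    simp only [hex, iff_false]
    exact (not_mem_Iu hb i).symm

lemma constraint_term_iff (hb : ∀ i, u i = 0 ∨ u i = 1) {k : ℕ}
    (cpos cneg : Fin k → Finset (Fin n)) (c : Fin k) :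
    1 - min1 ((Qmat cpos cneg).mulVec fun x => 1 - dvec u x) c = 0 ↔
      ¬ bodyTrue cpos cneg (Finset.univ.filter fun i => u i = 1) c := by
  unfold min1
  rw [mulVecQ, min1_bodyval hb]
  by_cases h : bodyTrue cpos cneg (Finset.univ.filter fun i => u i = 1) c <;>
    simp [h]

lemma aval_term_iff (hb : ∀ i, u i = 0 ∨ u i = 1) (hd : Fin m → Fin n)
    (pos neg : Fin m → Finset (Fin n)) (L : Finset (Fin n)) :
    1 - min (Aval hd pos neg u L) 1 = 0 ↔
      satLF hd pos neg (Finset.univ.filter fun i => u i = 1) L := by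
  classical
  set I := Finset.univ.filter fun i => u i = 1 with hI
  have hs1 : 0 ≤ ∑ i ∈ L, (1 - u i) :=
    Finset.sum_nonneg fun i _ => by show (0:ℝ) ≤ 1 - u i; linarith [u_le_one hb i]
  have hMnn : ∀ j, 0 ≤ Mvec pos neg u j := by
    intro j
    rw [Mvec_eq hb]
    split <;> norm_num
  have hs2 : 0 ≤ ∑ j ∈ Finset.univ.filter (isSupportRule hd pos L), Mvec pos neg u j :=
    Finset.sum_nonneg fun j _ => hMnn j
  rw [sub_eq_zero, eq_comm, min_eq_right_iff]
  unfold Aval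
  constructor
  · intro hA hLI
    by_contra hno
    push_neg at hno
    have h1 : (∑ i ∈ L, (1 - u i)) = 0 := by
      apply Finset.sum_eq_zero
      intro i hi
      have := hLI hi
      rw [hI, Finset.mem_filter] at this
      simp [this.2]
    have h2 : (∑ j ∈ Finset.univ.filter (isSupportRule hd pos L), Mvec pos neg u j) = 0 := by
      apply Finset.sum_eq_zero
      intro j hj
      rw [Finset.mem_filter] at hj
      rw [Mvec_eq hb, if_neg (hno j hj.2)]
    rw [h1, h2] at hA
    norm_num at hA
  · intro hsat
    by_cases hLI : L ⊆ I
    · obtain ⟨j, hjsup, hjbt⟩ := hsat hLI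
      have hjmem : j ∈ Finset.univ.filter (isSupportRule hd pos L) := by
        simp [hjsup]
      have : (1 : ℝ) ≤ ∑ j ∈ Finset.univ.filter (isSupportRule hd pos L), Mvec pos neg u j := by
        have := Finset.single_le_sum (f := fun j => Mvec pos neg u j)
          (fun j _ => hMnn j) hjmem
        rw [Mvec_eq hb, if_pos hjbt] at this
        exact this
      linarith
    · obtain ⟨i, hiL, hiI⟩ := Finset.not_subset.1 hLI
      have hui : u i = 0 := (not_mem_Iu hb i).1 hiI
      have : (1 : ℝ) ≤ ∑ i ∈ L, (1 - u i) := by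
        have := Finset.single_le_sum (f := fun i => 1 - u i)
          (fun i _ => by show (0:ℝ) ≤ 1 - u i; linarith [u_le_one hb i]) hiL
        rw [hui] at this; linarith
      linarith

end arith

/-- Proposition 6: for `ℓ₂, ℓ₃, ℓ₄ > 0` and `L₁, …, L_t` enumerating all
loops of `P`, `J_{SU+c+LF}(u) = J_SU(u) + ℓ₃·J_c(u) + ℓ₄·J_LF(u) = 0` iff `u ∈ {0,1}^n`
and `I = {i | u(i) = 1}` is a stable model of `P` satisfying every constraint of `C`. -/
theorem stmt10 {n m k : ℕ} (hd : Fin m → Fin n) (pos neg : Fin m → Finset (Fin n))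
    (cpos cneg : Fin k → Finset (Fin n)) (ℓ₂ ℓ₃ ℓ₄ : ℝ)
    (hℓ₂ : 0 < ℓ₂) (hℓ₃ : 0 < ℓ₃) (hℓ₄ : 0 < ℓ₄)
    (t : ℕ) (Ls : Fin t → Finset (Fin n)) (hinj : Function.Injective Ls)
    (henum : ∀ L, isLoop hd pos L ↔ ∃ s, Ls s = L) (u : Fin n → ℝ) :
    JSU hd pos neg ℓ₂ u + ℓ₃ * Jc cpos cneg u
        + ℓ₄ * (∑ s, (1 - min (Aval hd pos neg u (Ls s)) 1)) = 0 ↔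
      (∀ i, u i = 0 ∨ u i = 1) ∧
        isStable hd pos neg (Finset.univ.filter fun i => u i = 1) ∧
        ∀ c, ¬ bodyTrue cpos cneg (Finset.univ.filter fun i => u i = 1) c := by
  classical
  have hnormsq : ∀ (v : Fin n → ℝ), euclidNorm v ^ 2 = ∑ i, v i ^ 2 := fun v =>
    Real.sq_sqrt (Finset.sum_nonneg fun i _ => sq_nonneg _)
  have hJSU : JSU hd pos neg ℓ₂ u
      = 0.5 * ((∑ i, (u i - min1 (dvecOf hd pos neg u) i) ^ 2)
        + ℓ₂ * ∑ i, (u i * (1 - u i)) ^ 2) := by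
    unfold JSU; rw [hnormsq, hnormsq]
  have hS1nn : 0 ≤ ∑ i, (u i - min1 (dvecOf hd pos neg u) i) ^ 2 :=
    Finset.sum_nonneg fun i _ => sq_nonneg _
  have hS2nn : 0 ≤ ∑ i, (u i * (1 - u i)) ^ 2 :=
    Finset.sum_nonneg fun i _ => sq_nonneg _
  have hYnn' : ∀ c, 0 ≤ 1 - min1 ((Qmat cpos cneg).mulVec fun x => 1 - dvec u x) c := by
    intro c
    have : min1 ((Qmat cpos cneg).mulVec fun x => 1 - dvec u x) c ≤ 1 := min_le_right _ _
    linarith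
  have hYnn : 0 ≤ Jc cpos cneg u := Finset.sum_nonneg fun c _ => hYnn' c
  have hZnn' : ∀ s : Fin t, 0 ≤ 1 - min (Aval hd pos neg u (Ls s)) 1 := by
    intro s
    have : min (Aval hd pos neg u (Ls s)) 1 ≤ 1 := min_le_right _ _
    linarith
  have hZnn : 0 ≤ ∑ s, (1 - min (Aval hd pos neg u (Ls s)) 1) :=
    Finset.sum_nonneg fun s _ => hZnn' s
  constructor
  · intro h
    rw [hJSU] at h
    have h3 : 0 ≤ ℓ₃ * Jc cpos cneg u := mul_nonneg hℓ₃.le hYnn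
    have h4 : 0 ≤ ℓ₄ * ∑ s, (1 - min (Aval hd pos neg u (Ls s)) 1) :=
      mul_nonneg hℓ₄.le hZnn
    have h2' : 0 ≤ ℓ₂ * ∑ i, (u i * (1 - u i)) ^ 2 := mul_nonneg hℓ₂.le hS2nn
    have hS1 : ∑ i, (u i - min1 (dvecOf hd pos neg u) i) ^ 2 = 0 := by linarith
    have hS2 : ∑ i, (u i * (1 - u i)) ^ 2 = 0 := by
      have : ℓ₂ * ∑ i, (u i * (1 - u i)) ^ 2 = 0 := by linarith
      exact (mul_eq_zero.1 this).resolve_left (ne_of_gt hℓ₂)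
    have hJc0 : Jc cpos cneg u = 0 := by
      have : ℓ₃ * Jc cpos cneg u = 0 := by linarith
      exact (mul_eq_zero.1 this).resolve_left (ne_of_gt hℓ₃)
    have hZ0 : (∑ s, (1 - min (Aval hd pos neg u (Ls s)) 1)) = 0 := by
      have : ℓ₄ * ∑ s, (1 - min (Aval hd pos neg u (Ls s)) 1) = 0 := by linarith
      exact (mul_eq_zero.1 this).resolve_left (ne_of_gt hℓ₄)
    have hb : ∀ i, u i = 0 ∨ u i = 1 := by
      intro i
      have h0 := (Finset.sum_eq_zero_iff_of_nonneg fun i _ => sq_nonneg _).1 hS2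
        i (Finset.mem_univ i)
      have h0' : u i * (1 - u i) = 0 := by
        have := sq_eq_zero_iff.1 h0
        simpa using this
      rcases mul_eq_zero.1 h0' with h' | h'
      · exact Or.inl h'
      · exact Or.inr (by linarith)
    have hsupp0 : ∀ i, u i - min1 (dvecOf hd pos neg u) i = 0 := by
      intro i
      have h0 := (Finset.sum_eq_zero_iff_of_nonneg fun i _ => sq_nonneg _).1 hS1
        i (Finset.mem_univ i)
      have := sq_eq_zero_iff.1 h0
      simpa using this
    refine ⟨hb, ?_, ?_⟩
    · rw [lin_zhao]
      refine ⟨(supported_iff hb hd pos neg).1 hsupp0, ?_⟩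
      intro L hL
      obtain ⟨s, rfl⟩ := (henum L).1 hL
      have h0 := (Finset.sum_eq_zero_iff_of_nonneg fun s _ => hZnn' s).1 hZ0
        s (Finset.mem_univ s)
      exact (aval_term_iff hb hd pos neg (Ls s)).1 h0
    · intro c
      have h0 := (Finset.sum_eq_zero_iff_of_nonneg fun c _ => hYnn' c).1 hJc0
        c (Finset.mem_univ c)
      exact (constraint_term_iff hb cpos cneg c).1 h0
  · rintro ⟨hb, hst, hc⟩
    rw [lin_zhao] at hst
    have hS1 : ∑ i, (u i - min1 (dvecOf hd pos neg u) i) ^ 2 = 0 :=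
      Finset.sum_eq_zero fun i _ => by
        rw [(supported_iff hb hd pos neg).2 hst.1 i]; ring
    have hS2 : ∑ i, (u i * (1 - u i)) ^ 2 = 0 :=
      Finset.sum_eq_zero fun i _ => by
        rcases hb i with h' | h' <;> rw [h'] <;> ring
    have hJc0 : Jc cpos cneg u = 0 :=
      Finset.sum_eq_zero fun c _ => (constraint_term_iff hb cpos cneg c).2 (hc c)
    have hZ0 : (∑ s, (1 - min (Aval hd pos neg u (Ls s)) 1)) = 0 :=
      Finset.sum_eq_zero fun s _ =>
        (aval_term_iff hb hd pos neg (Ls s)).2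
          (hst.2 (Ls s) ((henum (Ls s)).2 ⟨s, rfl⟩))
    rw [hJSU, hS1, hS2, hJc0, hZ0]
    ring
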